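/- Suppose Ω : S^{d−1} → G(ℓ,k) is Hölder continuous and set V = ⋂_{ζ∈S^{d−1}} Ω(ζ). Then the set { ∫_{S^{d−1}} π_{Ω(ζ)^⊥}(b(ζ)) J(ζ) dσ(ζ) : b ∈ C^∞(S^{d−1}, ℂ^ℓ) } equals the orthogonal complement V^⊥ = { w ∈ ℂ^ℓ : ⟨w, v⟩ = 0 for all v ∈ V }. In particular, every such integral lies in V^⊥, and every w ∈ V^⊥ is attained by some smooth b. -/

import Mathlib

open MeasureTheory Metric
open scoped ENNReal Manifold

/-- `J(ζ) = ∑ a_j ζ_j²`. -/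
def aJ {d : ℕ} (a : Fin d → ℝ) (ζ : EuclideanSpace ℝ (Fin d)) : ℝ :=
  ∑ j, a j * (ζ j) ^ 2

/-- The orthogonal projection of `ℂ^ℓ` onto a subspace, as an endomorphism of `ℂ^ℓ`. -/
noncomputable def sphProj {ℓ : ℕ} (L : Submodule ℂ (EuclideanSpace ℂ (Fin ℓ))) :
    EuclideanSpace ℂ (Fin ℓ) →L[ℂ] EuclideanSpace ℂ (Fin ℓ) :=
  L.subtypeL.comp L.orthogonalProjectionOnto

namespace Stmt6Aux

open Set
open scoped InnerProductSpace

variable {ℓ : ℕ}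

lemma sphProj_orthogonal (L : Submodule ℂ (EuclideanSpace ℂ (Fin ℓ))) :
    sphProj Lᗮ = ContinuousLinearMap.id ℂ _ - sphProj L := by
  ext1 v
  have h : (L.orthogonalProjectionOnto v : EuclideanSpace ℂ (Fin ℓ)) + (Lᗮ.orthogonalProjectionOnto v : EuclideanSpace ℂ (Fin ℓ)) = v :=
    Submodule.starProjection_add_starProjection_orthogonal (K := L) v
  simp only [sphProj, ContinuousLinearMap.coe_comp', Function.comp_apply,
    Submodule.coe_subtypeL', Submodule.coe_subtype, ContinuousLinearMap.coe_sub',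
    Pi.sub_apply, ContinuousLinearMap.coe_id', id_eq]
  exact eq_sub_of_add_eq' h

lemma sphProj_zero_of_mem_orthogonal {L : Submodule ℂ (EuclideanSpace ℂ (Fin ℓ))}
    {v : EuclideanSpace ℂ (Fin ℓ)} (hv : v ∈ Lᗮ) : sphProj L v = 0 := by
  simp [sphProj, Submodule.orthogonalProjectionOnto_apply_of_mem_orthogonal hv]

lemma inner_sphProj_left_eq_right (L : Submodule ℂ (EuclideanSpace ℂ (Fin ℓ)))
    (u v : EuclideanSpace ℂ (Fin ℓ)) :
    ⟪sphProj L u, v⟫_ℂ = ⟪u, sphProj L v⟫_ℂ :=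
  Submodule.inner_starProjection_left_eq_right L u v

lemma inner_sphProj_self (L : Submodule ℂ (EuclideanSpace ℂ (Fin ℓ)))
    (u : EuclideanSpace ℂ (Fin ℓ)) :
    ⟪u, sphProj L u⟫_ℂ = (‖sphProj L u‖ ^ 2 : ℝ) := by
  have h1 : ⟪sphProj L u, sphProj L u⟫_ℂ = ⟪u, sphProj L (sphProj L u)⟫_ℂ :=
    inner_sphProj_left_eq_right L u (sphProj L u)
  have h2 : sphProj L (sphProj L u) = sphProj L u := by
    show (L.orthogonalProjectionOnto (L.orthogonalProjectionOnto u : EuclideanSpace ℂ (Fin ℓ)) : EuclideanSpace ℂ (Fin ℓ)) = L.orthogonalProjectionOnto u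
    rw [Submodule.orthogonalProjectionOnto_mem_subspace_eq_self]
  rw [h2] at h1
  rw [← h1, inner_self_eq_norm_sq_to_K]
  norm_num

lemma sphProj_eq_zero_iff {L : Submodule ℂ (EuclideanSpace ℂ (Fin ℓ))}
    {v : EuclideanSpace ℂ (Fin ℓ)} : sphProj L v = 0 ↔ v ∈ Lᗮ := by
  constructor
  · intro h
    have : L.orthogonalProjectionOnto v = 0 := by
      apply Subtype.ext
      simpa [sphProj] using h
    exact Submodule.orthogonalProjectionOnto_eq_zero_iff.mp this
  · exact sphProj_zero_of_mem_orthogonal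

/-- Positivity of `volume.toSphere` on nonempty open sets. -/
lemma toSphere_isOpenPos (d : ℕ) (hd : 0 < d) :
    ((volume : Measure (EuclideanSpace ℝ (Fin d))).toSphere).IsOpenPosMeasure := by
  constructor
  intro U hU hne
  have hm := hU.measurableSet
  rw [Measure.toSphere_apply' _ hm,
    ← Measure.toSphere_apply_aux (volume : Measure (EuclideanSpace ℝ (Fin d))) U
      ⟨1, mem_Ioi.2 one_pos⟩]
  set h := homeomorphUnitSphereProd (EuclideanSpace ℝ (Fin d))
  have hIio : IsOpen (Iio (⟨1, mem_Ioi.2 one_pos⟩ : Ioi (0:ℝ))) := by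
    have : (Iio (⟨1, mem_Ioi.2 one_pos⟩ : Ioi (0:ℝ)))
        = Subtype.val ⁻¹' (Iio (1:ℝ)) := by
      ext x; simp [← Subtype.coe_lt_coe]
    rw [this]
    exact isOpen_Iio.preimage continuous_subtype_val
  have hopen : IsOpen (Subtype.val '' (h ⁻¹' (U ×ˢ Iio ⟨1, mem_Ioi.2 one_pos⟩))) := by
    apply (isOpen_compl_singleton (x := (0 : EuclideanSpace ℝ (Fin d)))).isOpenMap_subtype_val
    exact (hU.prod hIio).preimage h.continuous
  have hnonempty : (Subtype.val '' (h ⁻¹' (U ×ˢ Iio ⟨1, mem_Ioi.2 one_pos⟩))).Nonempty := by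
    obtain ⟨x, hx⟩ := hne
    refine ⟨_, Set.mem_image_of_mem _ (x := h.symm (x, ⟨(1:ℝ)/2, by norm_num⟩)) ?_⟩
    simp only [Set.mem_preimage, Homeomorph.apply_symm_apply, Set.mem_prod]
    exact ⟨hx, by simp [Subtype.mk_lt_mk]; norm_num⟩
  have hpos := hopen.measure_pos (volume : Measure (EuclideanSpace ℝ (Fin d))) hnonempty
  have hdim : (0:ℕ) < Module.finrank ℝ (EuclideanSpace ℝ (Fin d)) := by
    rw [finrank_euclideanSpace_fin]; exact hd
  simp only [ne_eq, mul_eq_zero, not_or]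
  exact ⟨by exact_mod_cast hdim.ne', hpos.ne'⟩

lemma aJ_pos {d : ℕ} (a : Fin d → ℝ) (hapos : ∀ j, 0 < a j)
    {ζ : EuclideanSpace ℝ (Fin d)} (hζ : ζ ∈ sphere (0 : EuclideanSpace ℝ (Fin d)) 1) :
    0 < aJ a ζ := by
  have hnorm : ‖ζ‖ = 1 := by simpa using hζ
  have hsum : ∑ j, (ζ j) ^ 2 = 1 := by
    have h1 := EuclideanSpace.norm_eq ζ
    rw [hnorm] at h1
    have h2 : Real.sqrt (∑ j, ‖ζ j‖ ^ 2) = 1 := h1.symm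
    have h3 : ∑ j, ‖ζ j‖ ^ 2 = 1 := by
      have h4 := congrArg (· ^ 2) h2
      simp only [one_pow] at h4
      rwa [Real.sq_sqrt (Finset.sum_nonneg fun j _ => sq_nonneg ‖ζ j‖)] at h4
    simpa [Real.norm_eq_abs, sq_abs] using h3
  have hex : ∃ j ∈ Finset.univ, 0 < (ζ j) ^ 2 := by
    by_contra hc
    push_neg at hc
    have : ∑ j, (ζ j) ^ 2 = 0 := Finset.sum_eq_zero fun j hj =>
      le_antisymm (hc j hj) (sq_nonneg _)
    rw [this] at hsum; norm_num at hsum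
  obtain ⟨j, hj, hjpos⟩ := hex
  exact Finset.sum_pos' (fun i _ => mul_nonneg (hapos i).le (sq_nonneg _))
    ⟨j, hj, mul_pos (hapos j) hjpos⟩

lemma continuous_aJ {d : ℕ} (a : Fin d → ℝ) :
    Continuous fun ζ : EuclideanSpace ℝ (Fin d) => aJ a ζ := by
  refine continuous_finset_sum _ fun j _ => ?_
  exact continuous_const.mul (((EuclideanSpace.proj j).continuous).pow 2)

lemma continuous_of_holder {X : Type*} [MetricSpace X] {F : Type*} [NormedAddCommGroup F]
    (f : X → F) (C α : ℝ) (hα : 0 < α)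
    (h : ∀ x y : X, dist x y ≤ 1 → ‖f x - f y‖ ≤ C * dist x y ^ α) :
    Continuous f := by
  rw [Metric.continuous_iff]
  intro x ε hε
  have hC1 : (0:ℝ) < |C| + 1 := by positivity
  have hq : 0 < ε / (|C| + 1) := by positivity
  set δ₂ := (ε / (|C| + 1)) ^ (1/α) with hδ₂
  have hδ₂pos : 0 < δ₂ := Real.rpow_pos_of_pos hq _
  refine ⟨min 1 δ₂, lt_min one_pos hδ₂pos, fun y hy => ?_⟩
  have hd1 : dist y x ≤ 1 := le_of_lt (lt_of_lt_of_le hy (min_le_left _ _))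
  have hd2 : dist y x < δ₂ := lt_of_lt_of_le hy (min_le_right _ _)
  have hb := h y x hd1
  rw [dist_eq_norm]
  calc ‖f y - f x‖ ≤ C * dist y x ^ α := hb
    _ ≤ (|C| + 1) * dist y x ^ α := by
        apply mul_le_mul_of_nonneg_right _ (Real.rpow_nonneg dist_nonneg _)
        have := le_abs_self C; linarith
    _ < (|C| + 1) * δ₂ ^ α := by
        exact (mul_lt_mul_iff_right₀ hC1).2 (Real.rpow_lt_rpow dist_nonneg hd2 hα)
    _ = ε := by
        rw [hδ₂, ← Real.rpow_mul hq.le, one_div, inv_mul_cancel₀ hα.ne', Real.rpow_one]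
        field_simp

end Stmt6Aux

open scoped InnerProductSpace in
/-- The set of integrals `∫_{S^{d-1}} π_{Ω(ζ)^⊥}(b(ζ)) J(ζ) dσ(ζ)`, over all
smooth `b : S^{d-1} → ℂ^ℓ`, equals the orthogonal complement of `V = ⋂_ζ Ω(ζ)`. -/
theorem statement6 (d ℓ k n : ℕ) (hd : 2 ≤ d) (hk1 : 1 ≤ k) (hkl : k ≤ ℓ)
    (hn : d = n + 1)
    [Fact (Module.finrank ℝ (EuclideanSpace ℝ (Fin d)) = n + 1)]
    (a : Fin d → ℝ) (hapos : ∀ j, 0 < a j) (hasum : ∑ j, a j = d)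
    (Ω : EuclideanSpace ℝ (Fin d) → Submodule ℂ (EuclideanSpace ℂ (Fin ℓ)))
    (hrank : ∀ ζ ∈ sphere (0 : EuclideanSpace ℝ (Fin d)) 1, Module.finrank ℂ (Ω ζ) = k)
    (hΩHolder : ∃ C α : ℝ, 0 < α ∧ ∀ ζ₁ ∈ sphere (0 : EuclideanSpace ℝ (Fin d)) 1,
      ∀ ζ₂ ∈ sphere (0 : EuclideanSpace ℝ (Fin d)) 1, dist ζ₁ ζ₂ ≤ 1 →
        ‖sphProj (Ω ζ₁) - sphProj (Ω ζ₂)‖ ≤ C * dist ζ₁ ζ₂ ^ α) :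
    {w : EuclideanSpace ℂ (Fin ℓ) |
      ∃ b : sphere (0 : EuclideanSpace ℝ (Fin d)) 1 → EuclideanSpace ℂ (Fin ℓ),
        ContMDiff (𝓡 n) 𝓘(ℝ, EuclideanSpace ℂ (Fin ℓ)) (⊤ : ℕ∞) b ∧
        w = ∫ ζ : sphere (0 : EuclideanSpace ℝ (Fin d)) 1,
          aJ a (ζ : EuclideanSpace ℝ (Fin d)) • sphProj ((Ω (ζ : EuclideanSpace ℝ (Fin d)))ᗮ) (b ζ)
          ∂(volume : Measure (EuclideanSpace ℝ (Fin d))).toSphere}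
    =
    {w : EuclideanSpace ℂ (Fin ℓ) | ∀ v : EuclideanSpace ℂ (Fin ℓ),
      (∀ ζ ∈ sphere (0 : EuclideanSpace ℝ (Fin d)) 1, v ∈ Ω ζ) → inner ℂ w v = (0 : ℂ)} := by
  classical
  obtain ⟨C, α, hα, hHolder⟩ := hΩHolder
  haveI : CompactSpace (sphere (0 : EuclideanSpace ℝ (Fin d)) 1) :=
    isCompact_iff_compactSpace.mp (isCompact_sphere 0 1)
  set μ := (volume : Measure (EuclideanSpace ℝ (Fin d))).toSphere with hμ
  haveI : μ.IsOpenPosMeasure := Stmt6Aux.toSphere_isOpenPos d (by omega)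
  -- continuity facts
  have hPcont : Continuous fun ζ : sphere (0 : EuclideanSpace ℝ (Fin d)) 1 =>
      sphProj (Ω ↑ζ) := by
    apply Stmt6Aux.continuous_of_holder _ C α hα
    intro x y hxy
    exact hHolder ↑x x.2 ↑y y.2 hxy
  have hQcont : Continuous fun ζ : sphere (0 : EuclideanSpace ℝ (Fin d)) 1 =>
      sphProj ((Ω ↑ζ)ᗮ) := by
    have heq : (fun ζ : sphere (0 : EuclideanSpace ℝ (Fin d)) 1 => sphProj ((Ω ↑ζ)ᗮ))
        = fun ζ : sphere (0 : EuclideanSpace ℝ (Fin d)) 1 =>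
          ContinuousLinearMap.id ℂ (EuclideanSpace ℂ (Fin ℓ)) - sphProj (Ω ↑ζ) := by
      funext ζ; exact Stmt6Aux.sphProj_orthogonal _
    rw [heq]; exact continuous_const.sub hPcont
  have hJcont : Continuous fun ζ : sphere (0 : EuclideanSpace ℝ (Fin d)) 1 => aJ a ↑ζ :=
    (Stmt6Aux.continuous_aJ a).comp continuous_subtype_val
  have hJpos : ∀ ζ : sphere (0 : EuclideanSpace ℝ (Fin d)) 1, 0 < aJ a ↑ζ := fun ζ =>
    Stmt6Aux.aJ_pos a hapos ζ.2
  -- integrability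
  have key_int : ∀ b : sphere (0 : EuclideanSpace ℝ (Fin d)) 1 → EuclideanSpace ℂ (Fin ℓ),
      Continuous b →
      Integrable (fun ζ : sphere (0 : EuclideanSpace ℝ (Fin d)) 1 =>
        aJ a ↑ζ • sphProj ((Ω ↑ζ)ᗮ) (b ζ)) μ := fun b hb =>
    (hJcont.smul (hQcont.clm_apply hb)).integrable_of_hasCompactSupport
      (HasCompactSupport.of_compactSpace _)
  -- orthogonality of the integrals to V
  have key_orth : ∀ b : sphere (0 : EuclideanSpace ℝ (Fin d)) 1 → EuclideanSpace ℂ (Fin ℓ),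
      Continuous b → ∀ v, (∀ ζ ∈ sphere (0 : EuclideanSpace ℝ (Fin d)) 1, v ∈ Ω ζ) →
      ⟪v, ∫ ζ : sphere (0 : EuclideanSpace ℝ (Fin d)) 1,
        aJ a ↑ζ • sphProj ((Ω ↑ζ)ᗮ) (b ζ) ∂μ⟫_ℂ = 0 := by
    intro b hb v hv
    rw [← integral_inner (key_int b hb)]
    have heq : (fun ζ : sphere (0 : EuclideanSpace ℝ (Fin d)) 1 =>
        ⟪v, aJ a ↑ζ • sphProj ((Ω ↑ζ)ᗮ) (b ζ)⟫_ℂ) = fun _ => (0 : ℂ) := by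
      funext ζ
      have hQv : sphProj ((Ω ↑ζ)ᗮ) v = 0 := Stmt6Aux.sphProj_zero_of_mem_orthogonal
        ((Ω ↑ζ).le_orthogonal_orthogonal (hv ↑ζ ζ.2))
      rw [← Complex.coe_smul, inner_smul_right,
        ← Stmt6Aux.inner_sphProj_left_eq_right, hQv, inner_zero_left, mul_zero]
    rw [heq, integral_zero]
  -- the subspace V
  set V : Submodule ℂ (EuclideanSpace ℂ (Fin ℓ)) :=
    ⨅ ζ : sphere (0 : EuclideanSpace ℝ (Fin d)) 1, Ω ↑ζ with hV
  have hVmem : ∀ v, v ∈ V ↔ ∀ ζ ∈ sphere (0 : EuclideanSpace ℝ (Fin d)) 1, v ∈ Ω ζ := by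
    intro v
    rw [hV, Submodule.mem_iInf]
    exact ⟨fun h ζ hζ => h ⟨ζ, hζ⟩, fun h ζ => h ↑ζ ζ.2⟩
  -- the operator T
  set T : EuclideanSpace ℂ (Fin ℓ) →ₗ[ℂ] EuclideanSpace ℂ (Fin ℓ) :=
    { toFun := fun u => ∫ ζ : sphere (0 : EuclideanSpace ℝ (Fin d)) 1,
        aJ a ↑ζ • sphProj ((Ω ↑ζ)ᗮ) u ∂μ
      map_add' := by
        intro u v
        have h : ∀ ζ : sphere (0 : EuclideanSpace ℝ (Fin d)) 1,
            aJ a ↑ζ • sphProj ((Ω ↑ζ)ᗮ) (u + v)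
            = aJ a ↑ζ • sphProj ((Ω ↑ζ)ᗮ) u + aJ a ↑ζ • sphProj ((Ω ↑ζ)ᗮ) v := fun ζ => by
          rw [ContinuousLinearMap.map_add, smul_add]
        simp only [h]
        exact integral_add (key_int (fun _ => u) continuous_const)
          (key_int (fun _ => v) continuous_const)
      map_smul' := by
        intro c u
        have h : ∀ ζ : sphere (0 : EuclideanSpace ℝ (Fin d)) 1,
            aJ a ↑ζ • sphProj ((Ω ↑ζ)ᗮ) (c • u)
            = c • (aJ a ↑ζ • sphProj ((Ω ↑ζ)ᗮ) u) := fun ζ => by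
          rw [ContinuousLinearMap.map_smul, smul_comm]
        simp only [RingHom.id_apply, h]
        exact integral_smul c _ } with hT
  have hTmem : ∀ u, T u ∈ Vᗮ := by
    intro u
    rw [Submodule.mem_orthogonal]
    intro v hv
    exact key_orth (fun _ => u) continuous_const v ((hVmem v).1 hv)
  have hker : ∀ u, T u = 0 → u ∈ V := by
    intro u hu
    set g : sphere (0 : EuclideanSpace ℝ (Fin d)) 1 → ℝ :=
      fun ζ => aJ a ↑ζ * ‖sphProj ((Ω ↑ζ)ᗮ) u‖ ^ 2 with hg
    have hgcont : Continuous g :=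
      hJcont.mul ((hQcont.clm_apply continuous_const).norm.pow 2)
    have hgint : Integrable g μ :=
      hgcont.integrable_of_hasCompactSupport (HasCompactSupport.of_compactSpace _)
    have h2 : ∀ ζ : sphere (0 : EuclideanSpace ℝ (Fin d)) 1,
        ⟪u, aJ a ↑ζ • sphProj ((Ω ↑ζ)ᗮ) u⟫_ℂ = ((g ζ : ℝ) : ℂ) := by
      intro ζ
      rw [← Complex.coe_smul, inner_smul_right, Stmt6Aux.inner_sphProj_self]
      rw [hg]; push_cast; ring
    have hinner : ((∫ ζ, g ζ ∂μ : ℝ) : ℂ) = 0 := by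
      calc ((∫ ζ, g ζ ∂μ : ℝ) : ℂ)
          = ∫ ζ, ((g ζ : ℝ) : ℂ) ∂μ := integral_ofReal.symm
        _ = ∫ ζ : sphere (0 : EuclideanSpace ℝ (Fin d)) 1,
            ⟪u, aJ a ↑ζ • sphProj ((Ω ↑ζ)ᗮ) u⟫_ℂ ∂μ := by
            congr 1; funext ζ; exact (h2 ζ).symm
        _ = ⟪u, T u⟫_ℂ := integral_inner (key_int (fun _ => u) continuous_const) u
        _ = 0 := by rw [hu, inner_zero_right]
    have hgz : ∫ ζ, g ζ ∂μ = 0 := by exact_mod_cast hinner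
    have hae : g =ᵐ[μ] 0 := by
      refine (integral_eq_zero_iff_of_nonneg_ae ?_ hgint).mp hgz
      filter_upwards with ζ
      exact mul_nonneg (hJpos ζ).le (sq_nonneg _)
    have hg0 : g = 0 := (hgcont.ae_eq_iff_eq μ continuous_const).mp hae
    rw [hVmem]
    intro ζ hζ
    have hgζ : aJ a ζ * ‖sphProj ((Ω ζ)ᗮ) u‖ ^ 2 = 0 := congrFun hg0 ⟨ζ, hζ⟩
    have hpos := Stmt6Aux.aJ_pos a hapos hζ
    have hnorm : ‖sphProj ((Ω ζ)ᗮ) u‖ = 0 := by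
      have := mul_eq_zero.mp hgζ
      rcases this with h | h
      · exact absurd h hpos.ne'
      · exact pow_eq_zero_iff (by norm_num) |>.mp h
    have hQ0 : sphProj ((Ω ζ)ᗮ) u = 0 := norm_eq_zero.mp hnorm
    have hmem := Stmt6Aux.sphProj_eq_zero_iff.mp hQ0
    rwa [Submodule.orthogonal_orthogonal] at hmem
  -- injectivity and surjectivity of T restricted to Vᗮ
  set T' : ↥Vᗮ →ₗ[ℂ] ↥Vᗮ := (T.domRestrict Vᗮ).codRestrict Vᗮ (fun u => hTmem ↑u) with hT'
  have hinj : Function.Injective T' := by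
    refine (injective_iff_map_eq_zero T').mpr ?_
    intro u hu
    have h0 : T ↑u = 0 := by
      have h1 := congrArg Subtype.val hu
      exact h1
    have hmemV : (↑u : EuclideanSpace ℂ (Fin ℓ)) ∈ V := hker _ h0
    have hbot : (↑u : EuclideanSpace ℂ (Fin ℓ)) ∈ V ⊓ Vᗮ := ⟨hmemV, u.2⟩
    rw [Submodule.inf_orthogonal_eq_bot, Submodule.mem_bot] at hbot
    exact Subtype.ext hbot
  have hsurj : Function.Surjective T' := LinearMap.injective_iff_surjective.mp hinj
  -- conclusion
  ext w
  simp only [Set.mem_setOf_eq]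
  constructor
  · rintro ⟨b, hb, rfl⟩ v hv
    have h := key_orth b hb.continuous v hv
    rw [← inner_conj_symm, h, map_zero]
  · intro hw
    have hwmem : w ∈ Vᗮ := by
      rw [Submodule.mem_orthogonal]
      intro v hv
      have h := hw v ((hVmem v).1 hv)
      rw [← inner_conj_symm, h, map_zero]
    obtain ⟨u, hu⟩ := hsurj ⟨w, hwmem⟩
    refine ⟨fun _ => ↑u, contMDiff_const, ?_⟩
    have hTu : T ↑u = w := by
      have h1 := congrArg Subtype.val hu
      exact h1
    exact hTu.symm
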